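/- Let g,d ∈ ℕ* and (a_{−g},…,a_d) ∈ [0,1]^{g+d+1} with a_{−g} > 0, a_d > 0, ∑_{k=−g}^{d} a_k = 1 and ∑_{k=−g}^{d} k·a_k < 0, and assume additionally that φ(t) < t^{ln δ̂ / ln γ̂} for all t ∈ (1,γ̂). For λ ∈ Λ := {λ ∈ ℂ : δ̂ < |λ| < 1} set τ(λ) := ln|λ|/ln δ̂ and let N′(λ) be the number of roots of E_λ of modulus strictly less than γ̂^{τ(λ)}, counted with multiplicity. Then N′(·) is constant on Λ: there exists η′ ≥ 1 with N′(λ) = η′ for every λ ∈ Λ. -/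

import Mathlib

/-- `φ(t) := ∑_{k=-g}^{d} a_k t^k`. -/
noncomputable def phiF (g d : ℕ) (a : ℤ → ℝ) (t : ℝ) : ℝ :=
  ∑ k ∈ Finset.Icc (-(g : ℤ)) (d : ℤ), a k * t ^ k

/-- The polynomial `E_λ(z) := ∑_{k=-g}^{d} a_k z^{g+k} - λ z^g`. -/
noncomputable def Epoly (g d : ℕ) (a : ℤ → ℝ) (lam : ℂ) : Polynomial ℂ :=
  (∑ k ∈ Finset.Icc (-(g : ℤ)) (d : ℤ),
      Polynomial.C ((a k : ℝ) : ℂ) * Polynomial.X ^ ((g : ℤ) + k).toNat)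
    - Polynomial.C lam * Polynomial.X ^ g

open scoped Classical in
/-- `N'(λ)`: number of roots of `E_λ` of modulus `< γ̂^{τ(λ)}` with
`τ(λ) = ln|λ|/ln δ̂`, counted with multiplicity. Here `δhat = φ(γ̂)`. -/
noncomputable def Ncount' (g d : ℕ) (a : ℤ → ℝ) (γhat δhat : ℝ) (lam : ℂ) : ℕ :=
  Multiset.card (Multiset.filter
    (fun z : ℂ => ‖z‖ < γhat ^ (Real.log ‖lam‖ / Real.log δhat))
    (Epoly g d a lam).roots)


open Polynomial Filter Finset Topology

namespace RoucheAux

/-- prod lower bound for multisets of reals -/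
lemma pow_card_le_prod_real (s : Multiset ℝ) (ε : ℝ) (hε : 0 ≤ ε)
    (h : ∀ x ∈ s, ε ≤ x) : ε ^ Multiset.card s ≤ s.prod := by
  induction s using Multiset.induction with
  | empty => simp
  | cons a s ih =>
    simp only [Multiset.card_cons, Multiset.prod_cons, pow_succ]
    have ha : ε ≤ a := h a (Multiset.mem_cons_self a s)
    have hs : ε ^ Multiset.card s ≤ s.prod := ih fun x hx => h x (Multiset.mem_cons_of_mem hx)
    have h0 : (0:ℝ) ≤ s.prod := le_trans (pow_nonneg hε _) hs
    calc ε ^ Multiset.card s * ε ≤ s.prod * a := by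
          exact mul_le_mul hs ha hε h0
      _ = a * s.prod := mul_comm _ _

lemma card_filter_eq_of_rel {R : ℂ → ℂ → Prop} {p q : ℂ → Prop}
    [DecidablePred p] [DecidablePred q]
    {s t : Multiset ℂ} (hst : Multiset.Rel R s t)
    (h : ∀ x y, y ∈ t → R x y → (p x ↔ q y)) :
    Multiset.card (s.filter p) = Multiset.card (t.filter q) := by
  induction hst with
  | zero => simp
  | @cons a b s t hab hst ih =>
    have hb : b ∈ b ::ₘ t := Multiset.mem_cons_self b t
    have hiff := h a b hb hab
    have ih' := ih fun x y hy hxy => h x y (Multiset.mem_cons_of_mem hy) hxy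
    by_cases hpa : p a
    · rw [Multiset.filter_cons_of_pos _ hpa,
        Multiset.filter_cons_of_pos _ (hiff.mp hpa)]
      simp [ih']
    · rw [Multiset.filter_cons_of_neg _ hpa,
        Multiset.filter_cons_of_neg _ (fun hq => hpa (hiff.mpr hq))]
      exact ih'

lemma card_roots_monic {P : ℂ[X]} (hP : P.Monic) :
    Multiset.card P.roots = P.natDegree :=
  (Polynomial.splits_iff_card_roots).mp (IsAlgClosed.splits P)

lemma monic_prod_roots {P : ℂ[X]} (hP : P.Monic) :
    (P.roots.map fun x => X - C x).prod = P := by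
  have := Polynomial.C_leadingCoeff_mul_prod_multiset_X_sub_C (p := P) (card_roots_monic hP)
  rwa [hP.leadingCoeff, map_one, one_mul] at this

lemma abs_eval_eq_prod {P : ℂ[X]} (hP : P.Monic) (z : ℂ) :
    ‖P.eval z‖ = (P.roots.map fun x => ‖z - x‖).prod := by
  conv_lhs => rw [← monic_prod_roots hP]
  rw [Polynomial.eval_multiset_prod]
  rw [show ∀ s : Multiset ℂ, ‖s.prod‖ = (s.map norm).prod from
    fun s => map_multiset_prod (normHom : ℂ →*₀ ℝ) s]
  simp [Multiset.map_map, Function.comp_def]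


lemma roots_rel {ι : Type} (n : ℕ) (l : Filter ι) (F : ι → ℂ[X]) (P : ℂ[X])
    (hmF : ∀ i, (F i).Monic) (hmP : P.Monic)
    (hdF : ∀ i, (F i).natDegree = n) (hdP : P.natDegree = n)
    (hc : ∀ j, Tendsto (fun i => (F i).coeff j) l (𝓝 (P.coeff j)))
    {ε : ℝ} (hε : 0 < ε) :
    ∀ᶠ i in l, Multiset.Rel (fun x y => dist x y < ε) (F i).roots P.roots := by
  induction n generalizing F P ε with
  | zero =>
    have hP1 : P = 1 := hmP.natDegree_eq_zero.mp hdP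
    refine Eventually.of_forall fun i => ?_
    have hF1 : F i = 1 := (hmF i).natDegree_eq_zero.mp (hdF i)
    rw [hP1, hF1, Polynomial.roots_one]
    exact Multiset.Rel.zero
  | succ n ih =>
    -- a root of P
    have hPdeg : P.degree ≠ 0 := by
      rw [Polynomial.degree_eq_natDegree hmP.ne_zero, hdP]
      exact_mod_cast Nat.succ_ne_zero n
    obtain ⟨z, hz⟩ := IsAlgClosed.exists_root P hPdeg
    -- nearest root of F i
    have hne : ∀ i, ((F i).roots.toFinset.Nonempty) := by
      intro i
      rw [Multiset.toFinset_nonempty]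
      intro h0
      have := card_roots_monic (hmF i)
      rw [h0, hdF i] at this
      simp at this
    choose w hwmem hwmin using fun i =>
      Finset.exists_min_image ((F i).roots.toFinset) (fun x => dist z x) (hne i)
    have hwroot : ∀ i, w i ∈ (F i).roots := fun i => Multiset.mem_toFinset.mp (hwmem i)
    -- evaluation at z tends to 0
    have hevt : Tendsto (fun i => (F i).eval z) l (𝓝 0) := by
      have hform : ∀ i, (F i).eval z = ∑ j ∈ range (n+2), (F i).coeff j * z ^ j := by
        intro i
        exact Polynomial.eval_eq_sum_range' (by rw [hdF i]; omega) z
      have hformP : (0:ℂ) = ∑ j ∈ range (n+2), P.coeff j * z ^ j := by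
        rw [← Polynomial.eval_eq_sum_range' (by rw [hdP]; omega) z]
        exact hz.symm
      simp only [hform]
      rw [show (0:ℂ) = ∑ j ∈ range (n+2), P.coeff j * z ^ j from hformP]
      exact tendsto_finset_sum _ fun j _ => (hc j).mul tendsto_const_nhds
    -- w tends to z
    have hw : Tendsto w l (𝓝 z) := by
      rw [Metric.tendsto_nhds]
      intro ε' hε'
      have hev2 : ∀ᶠ i in l, ‖(F i).eval z‖ < ε' ^ (n+1) := by
        have : Tendsto (fun i => ‖(F i).eval z‖) l (𝓝 0) := by
          simpa using hevt.norm
        exact (this.eventually_lt_const (by positivity))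
      filter_upwards [hev2] with i hi
      by_contra hcon
      push_neg at hcon
      have hmin : ∀ x ∈ (F i).roots, ε' ≤ ‖z - x‖ := by
        intro x hx
        have h1 := hwmin i x (Multiset.mem_toFinset.mpr hx)
        have h2 : ε' ≤ dist z (w i) := by
          rw [dist_comm]; exact hcon
        rw [← Complex.dist_eq]
        exact le_trans h2 h1
      have hprod : ε' ^ (n+1) ≤ ((F i).roots.map fun x => ‖z - x‖).prod := by
        have hcard : Multiset.card ((F i).roots.map fun x => ‖z - x‖) = n+1 := by
          rw [Multiset.card_map, card_roots_monic (hmF i), hdF i]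
        rw [← hcard]
        apply pow_card_le_prod_real _ _ hε'.le
        intro x hx
        obtain ⟨y, hy, rfl⟩ := Multiset.mem_map.mp hx
        exact hmin y hy
      rw [← abs_eval_eq_prod (hmF i)] at hprod
      exact absurd hi (not_lt.mpr hprod)
    -- factor
    set G : ι → ℂ[X] := fun i => F i /ₘ (X - C (w i)) with hG
    set Q : ℂ[X] := P /ₘ (X - C z) with hQdef
    have hFfact : ∀ i, (X - C (w i)) * G i = F i := fun i =>
      (Polynomial.mul_divByMonic_eq_iff_isRoot).mpr (Polynomial.isRoot_of_mem_roots (hwroot i))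
    have hPfact : (X - C z) * Q = P :=
      (Polynomial.mul_divByMonic_eq_iff_isRoot).mpr hz
    have hmG : ∀ i, (G i).Monic := fun i =>
      (monic_X_sub_C (w i)).of_mul_monic_left (by rw [hFfact i]; exact hmF i)
    have hmQ : Q.Monic := (monic_X_sub_C z).of_mul_monic_left (by rw [hPfact]; exact hmP)
    have hdG : ∀ i, (G i).natDegree = n := by
      intro i
      rw [hG, Polynomial.natDegree_divByMonic _ (monic_X_sub_C (w i)),
        hdF i, natDegree_X_sub_C]
      omega
    have hdQ : Q.natDegree = n := by
      rw [hQdef, Polynomial.natDegree_divByMonic _ (monic_X_sub_C z), hdP, natDegree_X_sub_C]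
      omega
    have hcG : ∀ j, Tendsto (fun i => (G i).coeff j) l (𝓝 (Q.coeff j)) := by
      intro j
      have hform : ∀ i, (G i).coeff j =
          ∑ m ∈ Icc (j+1) (n+1), (w i) ^ (m - (j+1)) * (F i).coeff m := by
        intro i
        rw [hG, Polynomial.coeff_divByMonic_X_sub_C, hdF i]
      have hformQ : Q.coeff j = ∑ m ∈ Icc (j+1) (n+1), z ^ (m - (j+1)) * P.coeff m := by
        rw [hQdef, Polynomial.coeff_divByMonic_X_sub_C, hdP]
      simp only [hform, hformQ]
      exact tendsto_finset_sum _ fun m _ => (hw.pow _).mul (hc m)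
    have hrel := ih G Q hmG hmQ hdG hdQ hcG hε
    have hwev : ∀ᶠ i in l, dist (w i) z < ε := by
      have := (Metric.tendsto_nhds.mp hw) ε hε
      exact this
    filter_upwards [hrel, hwev] with i hi hwi
    have hrootsF : (F i).roots = (w i) ::ₘ (G i).roots := by
      conv_lhs => rw [← hFfact i]
      rw [Polynomial.roots_mul (by rw [hFfact i]; exact (hmF i).ne_zero),
        Polynomial.roots_X_sub_C, Multiset.singleton_add]
    have hrootsP : P.roots = z ::ₘ Q.roots := by
      conv_lhs => rw [← hPfact]
      rw [Polynomial.roots_mul (by rw [hPfact]; exact hmP.ne_zero),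
        Polynomial.roots_X_sub_C, Multiset.singleton_add]
    rw [hrootsF, hrootsP]
    exact Multiset.Rel.cons hwi hi


open scoped Classical in
lemma count_const_family (n : ℕ) (r : ℝ) (F : ℝ → ℂ[X])
    (hm : ∀ t, (F t).Monic) (hdeg : ∀ t, (F t).natDegree = n)
    (hcont : ∀ j, Continuous fun t => (F t).coeff j)
    (hnz : ∀ t z, ‖z‖ = r → (F t).eval z ≠ 0) :
    Multiset.card (((F 1).roots).filter (fun z => ‖z‖ < r)) =
    Multiset.card (((F 0).roots).filter (fun z => ‖z‖ < r)) := by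
  have hlc : IsLocallyConstant
      (fun t => Multiset.card (((F t).roots).filter (fun z => ‖z‖ < r))) := by
    rw [IsLocallyConstant.iff_eventually_eq]
    intro t₀
    have hsep : ∃ ε > 0, ∀ y ∈ (F t₀).roots, ε ≤ |‖y‖ - r| := by
      by_cases hs : (F t₀).roots.toFinset.Nonempty
      · refine ⟨min 1 ((F t₀).roots.toFinset.inf' hs fun x => |‖x‖ - r|),
          lt_min one_pos ?_, fun y hy => ?_⟩
        · rw [Finset.lt_inf'_iff]
          intro x hx
          have hxr : ‖x‖ ≠ r := fun h =>
            hnz t₀ x h (Polynomial.isRoot_of_mem_roots (Multiset.mem_toFinset.mp hx))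
          rw [abs_pos]
          exact sub_ne_zero_of_ne hxr
        · exact (min_le_right _ _).trans
            (Finset.inf'_le _ (Multiset.mem_toFinset.mpr hy))
      · exact ⟨1, one_pos, fun y hy => absurd ⟨y, Multiset.mem_toFinset.mpr hy⟩ hs⟩
    obtain ⟨ε, hε, hsepy⟩ := hsep
    have hrel := roots_rel n (𝓝 t₀) F (F t₀) hm (hm t₀) hdeg (hdeg t₀)
      (fun j => (hcont j).tendsto t₀) hε
    filter_upwards [hrel] with t ht
    apply card_filter_eq_of_rel ht
    intro x y hy hxy
    have h1 : |‖x‖ - ‖y‖| ≤ dist x y := by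
      rw [Complex.dist_eq]
      exact abs_norm_sub_norm_le x y
    have h2 : |‖x‖ - ‖y‖| < ε := lt_of_le_of_lt h1 hxy
    have h3 := hsepy y hy
    rcases lt_or_gt_of_ne (fun h : ‖y‖ = r =>
        hnz t₀ y h (Polynomial.isRoot_of_mem_roots hy)) with hyr | hyr
    · have : |‖y‖ - r| = r - ‖y‖ := by
        rw [abs_of_neg (by linarith)]; ring
      rw [this] at h3
      have h4 : ‖x‖ - ‖y‖ ≤ |‖x‖ - ‖y‖| :=
        le_abs_self _
      constructor
      · intro _; exact hyr
      · intro _; linarith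
    · have : |‖y‖ - r| = ‖y‖ - r := abs_of_pos (by linarith)
      rw [this] at h3
      have h4 : ‖y‖ - ‖x‖ ≤ |‖x‖ - ‖y‖| := by
        rw [abs_sub_comm]; exact le_abs_self _
      constructor
      · intro hx; linarith
      · intro hyy; linarith
  exact hlc.apply_eq_of_preconnectedSpace 1 0



lemma sum_shift {M : Type*} [AddCommMonoid M] (g d : ℕ) (h : ℤ → M) :
    ∑ k ∈ Finset.Icc (-(g:ℤ)) (d:ℤ), h k = ∑ j ∈ range (g+d+1), h ((j:ℤ) - g) := by
  apply Finset.sum_nbij' (i := fun k => ((g:ℤ) + k).toNat) (j := fun j => (j:ℤ) - g)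
  · intro k hk
    simp only [Finset.mem_Icc] at hk
    simp only [Finset.mem_range]
    omega
  · intro j hj
    simp only [Finset.mem_range] at hj
    simp only [Finset.mem_Icc]
    omega
  · intro k hk
    simp only [Finset.mem_Icc] at hk
    omega
  · intro j hj
    simp only [Finset.mem_range] at hj
    omega
  · intro k hk
    simp only [Finset.mem_Icc] at hk
    congr 1
    omega

lemma coeff_mk (N : ℕ) (c : ℕ → ℂ) (m : ℕ) :
    (∑ j ∈ range N, C (c j) * X^j).coeff m = if m < N then c m else 0 := by
  rw [Polynomial.finset_sum_coeff]
  simp only [Polynomial.coeff_C_mul, Polynomial.coeff_X_pow, mul_ite, mul_one, mul_zero]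
  rw [Finset.sum_ite_eq (range N) m c]
  simp [Finset.mem_range]

lemma natDegree_mk_le (N : ℕ) (c : ℕ → ℂ) :
    (∑ j ∈ range (N+1), C (c j) * X^j).natDegree ≤ N := by
  rw [Polynomial.natDegree_le_iff_coeff_eq_zero]
  intro m hm
  rw [coeff_mk]
  simp [Nat.not_lt.mpr, hm]

lemma eval_mk (N : ℕ) (c : ℕ → ℂ) (z : ℂ) :
    (∑ j ∈ range N, C (c j) * X^j).eval z = ∑ j ∈ range N, c j * z^j := by
  rw [Polynomial.eval_finset_sum]
  simp


end RoucheAux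

set_option maxHeartbeats 1000000 in
/-- under the additional condition `φ(t) < t^{ln δ̂ / ln γ̂}` on `(1,γ̂)`,
the refined root-counting function `N'(·)` is a constant `η' ≥ 1` on the annulus
`Λ = {λ : δ̂ < |λ| < 1}`. -/
theorem Ncount'_constant_on_annulus
    (g d : ℕ) (hg : 1 ≤ g) (hd : 1 ≤ d) (a : ℤ → ℝ)
    (ha01 : ∀ k ∈ Finset.Icc (-(g : ℤ)) (d : ℤ), 0 ≤ a k ∧ a k ≤ 1)
    (hag : 0 < a (-(g : ℤ))) (had : 0 < a (d : ℤ))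
    (hsum : ∑ k ∈ Finset.Icc (-(g : ℤ)) (d : ℤ), a k = 1)
    (hneri : ∑ k ∈ Finset.Icc (-(g : ℤ)) (d : ℤ), (k : ℝ) * a k < 0)
    (γhat : ℝ) (hγhat1 : 1 < γhat)
    (hγhatmin : ∀ t : ℝ, 1 < t → phiF g d a γhat ≤ phiF g d a t)
    (hpsi : ∀ t : ℝ, 1 < t → t < γhat →
      phiF g d a t < t ^ (Real.log (phiF g d a γhat) / Real.log γhat)) :
    ∃ η' : ℕ, 1 ≤ η' ∧ ∀ lam : ℂ,
      phiF g d a γhat < ‖lam‖ → ‖lam‖ < 1 →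
      Ncount' g d a γhat (phiF g d a γhat) lam = η' := by
  classical
  refine ⟨g, hg, ?_⟩
  intro lam hδlt hlt1
  have hγ0 : (0:ℝ) < γhat := lt_trans one_pos hγhat1
  -- positivity of δ = phiF γhat
  have hδpos : 0 < phiF g d a γhat := by
    refine Finset.sum_pos' (fun k hk => mul_nonneg (ha01 k hk).1 (zpow_pos hγ0 k).le)
      ⟨-(g:ℤ), ?_, mul_pos hag (zpow_pos hγ0 _)⟩
    simp only [Finset.mem_Icc]
    omega
  set δ := phiF g d a γhat with hδdef
  set L := ‖lam‖ with hLdef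
  have hL0 : 0 < L := lt_trans hδpos hδlt
  have hδ1 : δ < 1 := hδlt.trans hlt1
  have hlogδ : Real.log δ < 0 := Real.log_neg hδpos hδ1
  have hlogγ : 0 < Real.log γhat := Real.log_pos hγhat1
  have hlogL : Real.log L < 0 := Real.log_neg hL0 hlt1
  set τ := Real.log L / Real.log δ with hτdef
  have hτpos : 0 < τ := div_pos_of_neg_of_neg hlogL hlogδ
  have hlogδL : Real.log δ < Real.log L := Real.log_lt_log hδpos hδlt
  have hτ1 : τ < 1 := by
    rw [hτdef, div_lt_iff_of_neg hlogδ]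
    linarith
  set r := γhat ^ τ with hrdef
  have hr1 : (1:ℝ) < r := (Real.one_lt_rpow_iff_of_pos hγ0).mpr (Or.inl ⟨hγhat1, hτpos⟩)
  have hr0 : (0:ℝ) < r := lt_trans one_pos hr1
  have hrγ : r < γhat := by
    calc r = γhat ^ τ := hrdef
    _ < γhat ^ (1:ℝ) := Real.rpow_lt_rpow_of_exponent_lt hγhat1 hτ1
    _ = γhat := Real.rpow_one γhat
  have hLr : r ^ (Real.log δ / Real.log γhat) = L := by
    rw [hrdef, ← Real.rpow_mul hγ0.le]
    have hτc : τ * (Real.log δ / Real.log γhat) = Real.log L / Real.log γhat := by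
      rw [hτdef, div_mul_div_comm, mul_comm (Real.log L) (Real.log δ),
        mul_div_mul_left _ _ (ne_of_lt hlogδ)]
    rw [hτc, Real.rpow_def_of_pos hγ0]
    rw [show Real.log γhat * (Real.log L / Real.log γhat) = Real.log L by
      field_simp]
    exact Real.exp_log hL0
  have hφr : phiF g d a r < L := by
    have := hpsi r hr1 hrγ
    rwa [hLr] at this
  -- ======== the homotopy family ========
  set n := g + d with hn
  have hgn : g < n := by omega
  set ε₀ : ℝ := L / (2 * r ^ d) with hε₀def
  have hε₀pos : 0 < ε₀ := div_pos hL0 (by positivity)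
  set σ : ℝ → ℝ := fun t => max 0 (min 1 t) with hσdef
  have hσ0 : σ 0 = 0 := by simp [hσdef]
  have hσ1 : σ 1 = 1 := by simp [hσdef]
  have hσmem : ∀ t, 0 ≤ σ t ∧ σ t ≤ 1 := fun t =>
    ⟨le_max_left _ _, max_le (by norm_num) (min_le_left _ _)⟩
  have hσcont : Continuous σ := continuous_const.max (continuous_const.min continuous_id)
  set ρ : ℝ → ℕ → ℝ :=
    fun t j => t * a ((j:ℤ) - g) + (if j = n then (1 - t) * ε₀ else 0) with hρdef
  set γc : ℝ → ℕ → ℂ :=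
    fun t j => ((ρ t j : ℝ) : ℂ) - (if j = g then lam else 0) with hγcdef
  have hcastd : ((n:ℕ):ℤ) - (g:ℤ) = (d:ℤ) := by rw [hn]; push_cast; ring
  have hρn : ∀ t, 0 ≤ t → t ≤ 1 → 0 < ρ t n := by
    intro t h0 h1
    have had' : 0 < a (((n:ℕ):ℤ) - (g:ℤ)) := by rw [hcastd]; exact had
    simp only [hρdef, eq_self_iff_true, if_true]
    rcases eq_or_lt_of_le h1 with rfl | hlt
    · simpa using had'
    · have h2 : 0 < (1 - t) * ε₀ := mul_pos (by linarith) hε₀pos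
      have h3 : 0 ≤ t * a (((n:ℕ):ℤ) - (g:ℤ)) := mul_nonneg h0 had'.le
      linarith
  set Ffam : ℝ → Polynomial ℂ := fun t =>
    C ((((ρ (σ t) n : ℝ) : ℂ))⁻¹) * ∑ j ∈ range (n+1), C (γc (σ t) j) * X^j with hFdef
  have hρσ : ∀ t, 0 < ρ (σ t) n := fun t => hρn _ (hσmem t).1 (hσmem t).2
  have hu : ∀ t, (((ρ (σ t) n : ℝ):ℂ)) ≠ 0 := fun t =>
    Complex.ofReal_ne_zero.mpr (ne_of_gt (hρσ t))
  have hγcn : ∀ s : ℝ, γc s n = ((ρ s n : ℝ):ℂ) := by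
    intro s
    simp only [hγcdef, if_neg (by omega : ¬ n = g), sub_zero]
  have hcoeffF : ∀ t m, (Ffam t).coeff m =
      ((((ρ (σ t) n:ℝ):ℂ))⁻¹) * (if m < n+1 then γc (σ t) m else 0) := by
    intro t m
    rw [hFdef]
    simp only []
    rw [Polynomial.coeff_C_mul, RoucheAux.coeff_mk]
  have hcoeffn : ∀ t, (Ffam t).coeff n = 1 := by
    intro t
    rw [hcoeffF, if_pos (by omega), hγcn]
    exact inv_mul_cancel₀ (hu t)
  have hdegle : ∀ t, (Ffam t).natDegree ≤ n := fun t =>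
    le_trans (Polynomial.natDegree_C_mul_le _ _) (RoucheAux.natDegree_mk_le n _)
  have hmF : ∀ t, (Ffam t).Monic := fun t =>
    Polynomial.monic_of_natDegree_le_of_coeff_eq_one n (hdegle t) (hcoeffn t)
  have hdF : ∀ t, (Ffam t).natDegree = n := fun t =>
    le_antisymm (hdegle t) (Polynomial.le_natDegree_of_ne_zero
      (by rw [hcoeffn t]; exact one_ne_zero))
  have hρjc : ∀ jj, Continuous fun t => ρ (σ t) jj := by
    intro jj
    simp only [hρdef]
    apply Continuous.add (hσcont.mul continuous_const)
    by_cases hj : jj = n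
    · simp only [if_pos hj]
      exact (continuous_const.sub hσcont).mul continuous_const
    · simp only [if_neg hj]
      exact continuous_const
  have hcont : ∀ j, Continuous fun t => (Ffam t).coeff j := by
    intro j
    simp only [hcoeffF]
    refine Continuous.mul
      (Continuous.inv₀ (Complex.continuous_ofReal.comp (hρjc n)) fun t => hu t) ?_
    by_cases hjn : j < n+1
    · simp only [if_pos hjn, hγcdef]
      exact (Complex.continuous_ofReal.comp (hρjc j)).sub continuous_const
    · simp only [if_neg hjn]
      exact continuous_const
  -- positivity of coefficients
  have ha' : ∀ j, j ∈ range (n+1) → 0 ≤ a ((j:ℤ) - g) := by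
    intro j hj
    refine (ha01 _ ?_).1
    simp only [Finset.mem_range] at hj
    simp only [Finset.mem_Icc]
    omega
  have hρ_nonneg : ∀ s : ℝ, 0 ≤ s → s ≤ 1 → ∀ j ∈ range (n+1), 0 ≤ ρ s j := by
    intro s hs0 hs1 j hj
    simp only [hρdef]
    have h1 : 0 ≤ s * a ((j:ℤ) - g) := mul_nonneg hs0 (ha' j hj)
    have h2 : (0:ℝ) ≤ (if j = n then (1 - s) * ε₀ else 0) := by
      split_ifs
      · exact mul_nonneg (by linarith) hε₀pos.le
      · exact le_rfl
    linarith
  -- the key sum identity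
  have hsum_pow : ∑ j ∈ range (n+1), a ((j:ℤ) - g) * r ^ j = r ^ g * phiF g d a r := by
    have h1 : r ^ g * phiF g d a r
        = ∑ k ∈ Finset.Icc (-(g:ℤ)) (d:ℤ), a k * r ^ ((g:ℤ) + k).toNat := by
      rw [phiF, Finset.mul_sum]
      refine Finset.sum_congr rfl fun k hk => ?_
      simp only [Finset.mem_Icc] at hk
      have hnn : (0:ℤ) ≤ (g:ℤ) + k := by omega
      rw [← zpow_natCast r (((g:ℤ) + k).toNat), Int.toNat_of_nonneg hnn,
        zpow_add₀ (ne_of_gt hr0), ← zpow_natCast r g]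
      push_cast
      ring
    rw [h1, RoucheAux.sum_shift g d (fun k => a k * r ^ ((g:ℤ) + k).toNat)]
    rw [show g + d + 1 = n + 1 from by omega]
    refine Finset.sum_congr rfl fun j hj => ?_
    congr 1
    congr 1
    omega
  -- evaluation formula
  have hevalF : ∀ t z, (Ffam t).eval z = ((((ρ (σ t) n:ℝ):ℂ))⁻¹) *
      ((∑ j ∈ range (n+1), ((ρ (σ t) j:ℝ):ℂ) * z^j) - lam * z^g) := by
    intro t z
    rw [hFdef]
    simp only []
    rw [Polynomial.eval_mul, Polynomial.eval_C, RoucheAux.eval_mk]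
    congr 1
    simp only [hγcdef, sub_mul]
    rw [Finset.sum_sub_distrib]
    congr 1
    simp only [ite_mul, zero_mul]
    rw [Finset.sum_ite_eq' (range (n+1)) g (fun j => lam * z^j)]
    simp [Finset.mem_range]
    omega
  -- no roots on the circle
  have hnzF : ∀ t z, ‖z‖ = r → (Ffam t).eval z ≠ 0 := by
    intro t z hz
    rw [hevalF]
    apply mul_ne_zero (inv_ne_zero (hu t))
    intro h0
    rw [sub_eq_zero] at h0
    set s := σ t with hsdef
    have hs0 := (hσmem t).1
    have hs1 := (hσmem t).2
    have habs1 : ‖lam * z^g‖ = L * r^g := by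
      rw [norm_mul, norm_pow, hz, hLdef]
    have habs2 : ‖∑ j ∈ range (n+1), ((ρ s j:ℝ):ℂ) * z^j‖
        ≤ ∑ j ∈ range (n+1), ρ s j * r^j := by
      refine le_trans (norm_sum_le _ _) (le_of_eq ?_)
      refine Finset.sum_congr rfl fun j hj => ?_
      rw [norm_mul, norm_pow, hz, Complex.norm_real, Real.norm_eq_abs,
        abs_of_nonneg (hρ_nonneg s hs0 hs1 j hj)]
    have hsum_eval : ∑ j ∈ range (n+1), ρ s j * r^j
        = s * (r^g * phiF g d a r) + (1-s) * (ε₀ * r^n) := by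
      simp only [hρdef, add_mul, ite_mul, zero_mul]
      rw [Finset.sum_add_distrib]
      congr 1
      · rw [← hsum_pow, Finset.mul_sum]
        refine Finset.sum_congr rfl fun j hj => by ring
      · rw [Finset.sum_ite_eq' (range (n+1)) n (fun j => (1-s) * ε₀ * r^j)]
        simp [Finset.mem_range]
        ring
    have hB : ε₀ * r^n < L * r^g := by
      have hε₀rn : ε₀ * r^n = L * r^g / 2 := by
        rw [hε₀def, hn, pow_add]
        field_simp
      rw [hε₀rn]
      have : 0 < L * r^g := mul_pos hL0 (pow_pos hr0 g)
      linarith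
    have hA : r^g * phiF g d a r < L * r^g := by
      rw [mul_comm (r^g) (phiF g d a r), mul_comm L (r^g), mul_comm (phiF g d a r) (r^g)]
      exact mul_lt_mul_of_pos_left hφr (pow_pos hr0 g)
    have hconv : s * (r^g * phiF g d a r) + (1-s) * (ε₀*r^n) < L * r^g := by
      have hmin : (0:ℝ) < min (L*r^g - r^g * phiF g d a r) (L*r^g - ε₀*r^n) :=
        lt_min (by linarith) (by linarith)
      have k1 : s * (min (L*r^g - r^g * phiF g d a r) (L*r^g - ε₀*r^n))
          ≤ s * (L*r^g - r^g * phiF g d a r) :=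
        mul_le_mul_of_nonneg_left (min_le_left _ _) hs0
      have k2 : (1-s) * (min (L*r^g - r^g * phiF g d a r) (L*r^g - ε₀*r^n))
          ≤ (1-s) * (L*r^g - ε₀*r^n) :=
        mul_le_mul_of_nonneg_left (min_le_right _ _) (by linarith)
      nlinarith [k1, k2, hmin]
    rw [h0, habs1] at habs2
    linarith [le_trans habs2 hsum_eval.le]
  -- ======== identification at t = 1 ========
  have hEpoly_eq : (∑ j ∈ range (n+1), C (γc 1 j) * X^j) = Epoly g d a lam := by
    rw [Epoly]
    have hγc1 : ∀ j, γc 1 j = ((a ((j:ℤ)-g) : ℝ):ℂ) - (if j = g then lam else 0) := by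
      intro j
      simp [hγcdef, hρdef]
    simp only [hγc1, map_sub, sub_mul]
    rw [Finset.sum_sub_distrib]
    congr 1
    · rw [RoucheAux.sum_shift g d (fun k => C ((a k : ℝ):ℂ) * X ^ ((g:ℤ)+k).toNat),
        show g + d + 1 = n + 1 from by omega]
      refine (Finset.sum_congr rfl fun j hj => ?_).symm
      congr 2
      omega
    · have : ∀ j, C (if j = g then lam else 0) * X^j
          = (if j = g then C lam * X^j else 0) := by
        intro j
        split_ifs <;> simp
      simp only [this]
      rw [Finset.sum_ite_eq' (range (n+1)) g (fun j => C lam * X^j)]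
      simp only [Finset.mem_range, if_pos (by omega : g < n+1)]
  have hroots1 : (Ffam 1).roots = (Epoly g d a lam).roots := by
    rw [hFdef]
    simp only []
    rw [Polynomial.roots_C_mul _ (inv_ne_zero (hu 1)), hσ1, hEpoly_eq]
  -- ======== count at t = 0 ========
  set q : Polynomial ℂ := C ((ε₀:ℝ):ℂ) * X^d - C lam with hqdef
  have hqc : q.coeff d = ((ε₀:ℝ):ℂ) := by
    rw [hqdef]
    simp [Polynomial.coeff_C, show d ≠ 0 by omega]
  have hq0 : q ≠ 0 := fun h =>
    Complex.ofReal_ne_zero.mpr (ne_of_gt hε₀pos) (by rw [← hqc, h]; simp)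
  have hF0sum : (∑ j ∈ range (n+1), C (γc 0 j) * X^j) = X^g * q := by
    have hγc0 : ∀ j, γc 0 j = (if j = n then ((ε₀:ℝ):ℂ) else 0)
        - (if j = g then lam else 0) := by
      intro j
      simp only [hγcdef, hρdef, zero_mul, one_mul, zero_add, sub_zero]
      congr 1
      split_ifs <;> simp
    simp only [hγc0, map_sub, sub_mul]
    rw [Finset.sum_sub_distrib]
    have e1 : ∀ j, C (if j = n then ((ε₀:ℝ):ℂ) else 0) * X^j
        = (if j = n then C ((ε₀:ℝ):ℂ) * X^j else 0) := by
      intro j; split_ifs <;> simp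
    have e2 : ∀ j, C (if j = g then lam else 0) * X^j
        = (if j = g then C lam * X^j else 0) := by
      intro j; split_ifs <;> simp
    simp only [e1, e2]
    rw [Finset.sum_ite_eq' (range (n+1)) n (fun j => C ((ε₀:ℝ):ℂ) * X^j),
      Finset.sum_ite_eq' (range (n+1)) g (fun j => C lam * X^j)]
    simp only [Finset.mem_range, if_pos (by omega : n < n+1), if_pos (by omega : g < n+1)]
    rw [hqdef, hn]
    ring
  have hroots0 : (Ffam 0).roots = g • ({0} : Multiset ℂ) + q.roots := by
    rw [hFdef]
    simp only []
    rw [Polynomial.roots_C_mul _ (inv_ne_zero (hu 0)), hσ0, hF0sum,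
      Polynomial.roots_mul (mul_ne_zero (pow_ne_zero g Polynomial.X_ne_zero) hq0),
      Polynomial.roots_pow, Polynomial.roots_X]
  have hqroots : ∀ x ∈ q.roots, ¬ (‖x‖ < r) := by
    intro x hx hlt
    have hroot : q.eval x = 0 := Polynomial.isRoot_of_mem_roots hx
    rw [hqdef] at hroot
    simp only [Polynomial.eval_sub, Polynomial.eval_mul, Polynomial.eval_C,
      Polynomial.eval_pow, Polynomial.eval_X, sub_eq_zero] at hroot
    have habs : ε₀ * (‖x‖)^d = L := by
      have := congrArg norm hroot
      rwa [norm_mul, norm_pow, Complex.norm_real, Real.norm_eq_abs, abs_of_nonneg hε₀pos.le, ← hLdef] at this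
    have hxr : (‖x‖)^d < r^d :=
      pow_lt_pow_left₀ hlt (norm_nonneg x) (by omega)
    have h2r : ε₀ * r^d = L / 2 := by
      rw [hε₀def]
      field_simp
    nlinarith [pow_pos hr0 d, mul_lt_mul_of_pos_left hxr hε₀pos]
  have hcount0 : Multiset.card (((Ffam 0).roots).filter (fun z => ‖z‖ < r)) = g := by
    classical
    rw [hroots0, Multiset.filter_add, Multiset.card_add]
    have h1 : Multiset.filter (fun z => ‖z‖ < r) (g • ({0} : Multiset ℂ))
        = g • ({0} : Multiset ℂ) := by
      apply Multiset.filter_eq_self.mpr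
      intro z hz
      have : z = 0 := by
        have := Multiset.mem_of_mem_nsmul hz
        simpa using this
      rw [this]
      simpa using lt_trans one_pos hr1
    have h2 : Multiset.filter (fun z => ‖z‖ < r) q.roots = 0 :=
      Multiset.filter_eq_nil.mpr hqroots
    rw [h1, h2]
    simp
  -- ======== conclusion ========
  have hkey := RoucheAux.count_const_family n r Ffam hmF hdF hcont hnzF
  rw [hroots1] at hkey
  rw [hcount0] at hkey
  rw [Ncount']
  rw [← hLdef, ← hτdef, ← hrdef]
  exact hkey
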